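/- arXiv:1608.01183 — 3 statements merged into one kernel-verified Lean document; each statement's English description precedes it below -/
import Mathlib

section
/- Let A ∈ ℂ^{p×m}, B ∈ ℂ^{n×q}, C ∈ ℂ^{p×n}, D ∈ ℂ^{m×q}. The homogeneous equation AXB + CX*D = 0 has only the trivial solution X = 0 (X ∈ ℂ^{m×n}) if and only if the system of two equations AXB + CYD = 0 and D*XC* + B*YA* = 0, in the unknowns X ∈ ℂ^{m×n} and Y ∈ ℂ^{n×m}, has only the trivial solution X = 0, Y = 0. -/
open Matrix

/-- The matrix pencil `λ M + N`, as a matrix with entries in `ℂ[λ]`. -/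
noncomputable def pencilMat {k l : ℕ} (M N : Matrix (Fin k) (Fin l) ℂ) :
    Matrix (Fin k) (Fin l) (Polynomial ℂ) :=
  Matrix.of fun i j => Polynomial.X * Polynomial.C (M i j) + Polynomial.C (N i j)

/-- Determinant of a possibly rectangular polynomial matrix: the usual determinant if the
matrix is square, and `0` (by convention) otherwise. -/
noncomputable def polyDet {a b : ℕ} (M : Matrix (Fin a) (Fin b) (Polynomial ℂ)) :
    Polynomial ℂ :=
  if h : a = b then (M.submatrix (Fin.cast h.symm) id).det else 0

/-- A (polynomial-matrix) pencil is regular if its characteristic polynomial is not zero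
(in particular the pencil must be square). -/
def PolyMatRegular {a b : ℕ} (M : Matrix (Fin a) (Fin b) (Polynomial ℂ)) : Prop :=
  polyDet M ≠ 0

/-- The spectrum of a pencil, as a subset of `ℂ ∪ {∞}` (modelled by `WithTop ℂ`):
the finite eigenvalues are the roots of the characteristic polynomial, and `∞` is an
eigenvalue whenever the degree of the characteristic polynomial is less than the size. -/
noncomputable def specSet {a b : ℕ} (M : Matrix (Fin a) (Fin b) (Polynomial ℂ)) :
    Set (WithTop ℂ) :=
  {x | (∃ c : ℂ, x = (c : WithTop ℂ) ∧ (polyDet M).IsRoot c) ∨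
       (x = ⊤ ∧ (polyDet M).degree < (b : ℕ))}

/-- Algebraic multiplicity of a finite eigenvalue of a pencil. -/
noncomputable def finMult {a b : ℕ} (M : Matrix (Fin a) (Fin b) (Polynomial ℂ)) (c : ℂ) : ℕ :=
  (polyDet M).rootMultiplicity c

/-- Multiplicity of the infinite eigenvalue of a pencil. -/
noncomputable def infMult {a b : ℕ} (M : Matrix (Fin a) (Fin b) (Polynomial ℂ)) : ℕ :=
  b - (polyDet M).natDegree

/-- Extended reciprocal on `ℂ ∪ {∞}`, with the conventions `0⁻¹ = ∞` and `∞⁻¹ = 0`. -/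
noncomputable def recipExt : WithTop ℂ → WithTop ℂ :=
  WithTop.recTopCoe ((0 : ℂ) : WithTop ℂ)
    (fun c => if c = 0 then (⊤ : WithTop ℂ) else ((c⁻¹ : ℂ) : WithTop ℂ))

/-- Complex conjugation extended to `ℂ ∪ {∞}`, with `conj ∞ = ∞`. -/
noncomputable def conjExt : WithTop ℂ → WithTop ℂ :=
  WithTop.map (starRingEnd ℂ)

/-- A subset of `ℂ ∪ {∞}` is reciprocal free if `λ ≠ μ⁻¹` for all `λ, μ` in it. -/
def RecipFree (S : Set (WithTop ℂ)) : Prop :=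
  ∀ x ∈ S, ∀ y ∈ S, x ≠ recipExt y

/-- A subset of `ℂ ∪ {∞}` is `*`-reciprocal free if `λ ≠ (conj μ)⁻¹` for all `λ, μ` in it. -/
def StarRecipFree (S : Set (WithTop ℂ)) : Prop :=
  ∀ x ∈ S, ∀ y ∈ S, x ≠ recipExt (conjExt y)

/-- The pencil `Q(λ) = [[λ Dᵀ, Bᵀ], [A, λ C]]` associated with `A X B + C Xᵀ D = E`. -/
noncomputable def Qt {p m n q : ℕ} (A : Matrix (Fin p) (Fin m) ℂ) (B : Matrix (Fin n) (Fin q) ℂ)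
    (C : Matrix (Fin p) (Fin n) ℂ) (D : Matrix (Fin m) (Fin q) ℂ) :
    Matrix (Fin (q + p)) (Fin (m + n)) (Polynomial ℂ) :=
  Matrix.reindex finSumFinEquiv finSumFinEquiv
    (Matrix.fromBlocks (pencilMat Dᵀ 0) (pencilMat 0 Bᵀ) (pencilMat 0 A) (pencilMat C 0))

/-- The pencil `Q(λ) = [[λ D*, B*], [A, λ C]]` associated with `A X B + C X* D = E`. -/
noncomputable def Qs {p m n q : ℕ} (A : Matrix (Fin p) (Fin m) ℂ) (B : Matrix (Fin n) (Fin q) ℂ)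
    (C : Matrix (Fin p) (Fin n) ℂ) (D : Matrix (Fin m) (Fin q) ℂ) :
    Matrix (Fin (q + p)) (Fin (m + n)) (Polynomial ℂ) :=
  Matrix.reindex finSumFinEquiv finSumFinEquiv
    (Matrix.fromBlocks (pencilMat Dᴴ 0) (pencilMat 0 Bᴴ) (pencilMat 0 A) (pencilMat C 0))

/-- A (possibly rectangular) matrix is invertible if it has a two-sided inverse. -/
def HasTwoSidedInverse {a b : Type*} [Fintype a] [Fintype b] [DecidableEq a] [DecidableEq b]
    (M : Matrix a b ℂ) : Prop :=
  ∃ N : Matrix b a ℂ, M * N = 1 ∧ N * M = 1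

/-- Core spectrum obtained by removing the dimension-induced infinite eigenvalue:
`Λ(Q)` if `m_∞(Q) ≠ d`, and `Λ(Q) \ {∞}` if `m_∞(Q) = d`. -/
noncomputable def coreSpecInf {a b : ℕ} (M : Matrix (Fin a) (Fin b) (Polynomial ℂ)) (d : ℕ) :
    Set (WithTop ℂ) :=
  if infMult M = d then specSet M \ {(⊤ : WithTop ℂ)} else specSet M

/-- Core spectrum obtained by removing the dimension-induced zero eigenvalue:
`Λ(Q)` if `m₀(Q) ≠ d`, and `Λ(Q) \ {0}` if `m₀(Q) = d`. -/
noncomputable def coreSpecZero {a b : ℕ} (M : Matrix (Fin a) (Fin b) (Polynomial ℂ)) (d : ℕ) :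
    Set (WithTop ℂ) :=
  if finMult M 0 = d then specSet M \ {((0 : ℂ) : WithTop ℂ)} else specSet M

/-- The block matrix `M_s(A, C)` with `A` on the block diagonal and `C` below it. -/
noncomputable def blockM {p m : ℕ} (s : ℕ) (A C : Matrix (Fin p) (Fin m) ℂ) :
    Matrix (Fin (s + 1) × Fin p) (Fin s × Fin m) ℂ :=
  Matrix.of fun ir jc =>
    if (ir.1 : ℕ) = (jc.1 : ℕ) then A ir.2 jc.2
    else if (ir.1 : ℕ) = (jc.1 : ℕ) + 1 then C ir.2 jc.2 else 0

/-- The homogeneous `*`-Sylvester equation `A X B + C Xᴴ D = 0` has only the trivial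
solution iff the linear system `A X B + C Y D = 0`, `Dᴴ X Cᴴ + Bᴴ Y Aᴴ = 0` has only the
trivial solution. -/
theorem stmt4 (p m n q : ℕ) (A : Matrix (Fin p) (Fin m) ℂ) (B : Matrix (Fin n) (Fin q) ℂ)
    (C : Matrix (Fin p) (Fin n) ℂ) (D : Matrix (Fin m) (Fin q) ℂ) :
    (∀ X : Matrix (Fin m) (Fin n) ℂ, A * X * B + C * Xᴴ * D = 0 → X = 0) ↔
      (∀ (X : Matrix (Fin m) (Fin n) ℂ) (Y : Matrix (Fin n) (Fin m) ℂ),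
        A * X * B + C * Y * D = 0 → Dᴴ * X * Cᴴ + Bᴴ * Y * Aᴴ = 0 → X = 0 ∧ Y = 0) := by
  constructor
  · intro h X Y h1 h2
    have h2' : C * Xᴴ * D + A * Yᴴ * B = 0 := by
      have := congrArg Matrix.conjTranspose h2
      simpa [Matrix.conjTranspose_add, Matrix.conjTranspose_mul, Matrix.mul_assoc,
        add_comm] using this
    have e1 : X + Yᴴ = 0 := by
      apply h
      have : A * (X + Yᴴ) * B + C * (X + Yᴴ)ᴴ * D =
          (A * X * B + C * Y * D) + (C * Xᴴ * D + A * Yᴴ * B) := by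
        simp [Matrix.mul_add, Matrix.add_mul, Matrix.conjTranspose_add]
        abel
      rw [this, h1, h2']
      simp
    have e2 : Complex.I • (X - Yᴴ) = 0 := by
      apply h
      have : A * (Complex.I • (X - Yᴴ)) * B + C * (Complex.I • (X - Yᴴ))ᴴ * D =
          Complex.I • ((A * X * B + C * Y * D) - (C * Xᴴ * D + A * Yᴴ * B)) := by
        simp [Matrix.mul_sub, Matrix.sub_mul, Matrix.conjTranspose_sub, Matrix.mul_smul,
          Matrix.smul_mul, Matrix.conjTranspose_smul, smul_sub, Complex.conj_I,
          mul_smul_comm, smul_mul_assoc, Matrix.mul_add, Matrix.add_mul]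
        abel
      rw [this, h1, h2']
      simp
    have e2' : X - Yᴴ = 0 := by
      have := congrArg (fun M => (Complex.I)⁻¹ • M) e2
      simpa [smul_smul, Complex.I_ne_zero] using this
    have hX : X = 0 := by
      have := congrArg (fun M => (2:ℂ)⁻¹ • M) (congrArg₂ (· + ·) e1 e2')
      simp at this
      have h2X : (2:ℂ)⁻¹ • (X + Yᴴ + (X - Yᴴ)) = 0 := by
        rw [e1, e2']; simp
      have : X + Yᴴ + (X - Yᴴ) = (2:ℂ) • X := by
        rw [two_smul]; abel
      rw [this] at h2X
      simpa [smul_smul] using h2X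
    refine ⟨hX, ?_⟩
    have : Yᴴ = 0 := by
      have := e1
      rw [hX] at this
      simpa using this
    calc Y = Yᴴᴴ := by simp
    _ = 0 := by rw [this]; simp
  · intro h X hX
    have h2 : Dᴴ * X * Cᴴ + Bᴴ * Xᴴ * Aᴴ = 0 := by
      have := congrArg Matrix.conjTranspose hX
      simpa [Matrix.conjTranspose_add, Matrix.conjTranspose_mul, Matrix.mul_assoc,
        add_comm] using this
    exact (h X Xᴴ hX h2).1
end

section
/- Let A, C ∈ ℂ^{p×m} and B, D ∈ ℂ^{n×q} with p, m, n, q positive. If the generalized Sylvester equation AXB − CXD = E (with unknown X ∈ ℂ^{m×n}) has exactly one solution for every right-hand side E ∈ ℂ^{p×q}, then p/m = n/q = d for some d ∈ {1} ∪ { s/(s+1) : s a positive integer } ∪ { (s+1)/s : s a positive integer }; equivalently, either (p = m and n = q), or there is a positive integer s with ms = p(s+1) and qs = n(s+1), or there is a positive integer s with ps = m(s+1) and ns = q(s+1). -/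
open Matrix

namespace Syl12

open Finset

variable {a b : ℕ}

/-- zero-extension of a `Fin t`-indexed block vector to `ℕ`-indexed -/
def extv {t : ℕ} (x : Fin t × Fin b → ℂ) : ℕ → Fin b → ℂ :=
  fun k i => if h : k < t then x (⟨k, h⟩, i) else 0

lemma extv_of_ge {t : ℕ} (x : Fin t × Fin b → ℂ) {k : ℕ} (h : t ≤ k) : extv x k = 0 := by
  funext i; simp [extv, Nat.not_lt.mpr h]

lemma extv_of_lt {t : ℕ} (x : Fin t × Fin b → ℂ) {k : ℕ} (h : k < t) (i : Fin b) :
    extv x k i = x (⟨k, h⟩, i) := dif_pos h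

lemma extv_eq_zero_iff {t : ℕ} (x : Fin t × Fin b → ℂ) : extv x = 0 ↔ x = 0 := by
  constructor
  · intro h; funext ⟨k, i⟩
    have := congrFun (congrFun h (k : ℕ)) i
    rwa [extv_of_lt x k.isLt i, Fin.eta] at this
  · rintro rfl; funext k i; simp [extv]

/-- shift: `shf f 0 = 0`, `shf f (j+1) = f j` -/
def shf (f : ℕ → Fin b → ℂ) : ℕ → Fin b → ℂ
  | 0 => 0
  | j + 1 => f j

/-- `x` is (the coefficient list of) a polynomial solution of the pencil `P + λ Q`,
supported in degrees `< t`. -/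
def SolPred (P Q : Matrix (Fin a) (Fin b) ℂ) (t : ℕ) (x : ℕ → Fin b → ℂ) : Prop :=
  (∀ k, t ≤ k → x k = 0) ∧ P *ᵥ x 0 = 0 ∧ ∀ k, P *ᵥ x (k + 1) + Q *ᵥ x k = 0

/-- `u` is an open left chain of the pencil `P + λ Q` of length `t`. -/
def ChainPred (P Q : Matrix (Fin a) (Fin b) ℂ) (t : ℕ) (u : ℕ → Fin a → ℂ) : Prop :=
  (∀ k, t ≤ k → u k = 0) ∧ ∀ k, k + 1 < t → u k ᵥ* P + u (k + 1) ᵥ* Q = 0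

variable (P Q : Matrix (Fin a) (Fin b) ℂ)

lemma blockM_mulVec_apply {t : ℕ} (x : Fin t × Fin b → ℂ) (i : Fin (t + 1)) (c : Fin a) :
    (blockM t P Q *ᵥ x) (i, c)
      = (P *ᵥ extv x (i : ℕ)) c + (Q *ᵥ shf (extv x) (i : ℕ)) c := by
  have hsum : (blockM t P Q *ᵥ x) (i, c)
      = ∑ j : Fin t, ∑ d : Fin b,
          (if (i : ℕ) = (j : ℕ) then P c d * x (j, d) else 0)
          + ∑ j : Fin t, ∑ d : Fin b,
          (if (i : ℕ) = (j : ℕ) + 1 then Q c d * x (j, d) else 0) := by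
    rw [Matrix.mulVec, dotProduct, Fintype.sum_prod_type, ← Finset.sum_add_distrib]
    refine Finset.sum_congr rfl fun j _ => ?_
    rw [← Finset.sum_add_distrib]
    refine Finset.sum_congr rfl fun d _ => ?_
    by_cases h1 : (i : ℕ) = (j : ℕ)
    · have h2 : ¬ ((i : ℕ) = (j : ℕ) + 1) := by omega
      simp [blockM, h1, h2]
    · by_cases h2 : (i : ℕ) = (j : ℕ) + 1 <;> simp [blockM, h1, h2]
  rw [hsum]
  congr 1
  · -- P part
    by_cases h : (i : ℕ) < t
    · rw [Finset.sum_eq_single (⟨(i : ℕ), h⟩ : Fin t)]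
      · simp only [Matrix.mulVec, dotProduct]
        refine Finset.sum_congr rfl fun d _ => ?_
        rw [extv_of_lt x h d]; simp
      · intro j _ hj
        have : ¬ ((i : ℕ) = (j : ℕ)) := fun hc => hj (by ext; simpa using hc.symm)
        simp [this]
      · intro h'; exact absurd (Finset.mem_univ _) h'
    · have h0 : ∀ j : Fin t, ¬ ((i : ℕ) = (j : ℕ)) := fun j hc => h (hc ▸ j.isLt)
      rw [extv_of_ge x (Nat.not_lt.mp h)]
      simp [h0]
  · -- Q part
    match hi : (i : ℕ) with
    | 0 => simp [shf]
    | k + 1 =>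
      have hk : k < t := by have := i.isLt; omega
      rw [Finset.sum_eq_single (⟨k, hk⟩ : Fin t)]
      · simp only [shf, Matrix.mulVec, dotProduct]
        refine Finset.sum_congr rfl fun d _ => ?_
        rw [extv_of_lt x hk d]; simp
      · intro j _ hj
        have : ¬ (k + 1 = (j : ℕ) + 1) := by
          intro hc; exact hj (by ext; simp; omega)
        have this' : ¬ (k = (j : ℕ)) := by omega
        simp [this, this']
      · intro h'; exact absurd (Finset.mem_univ _) h'

lemma blockM_transpose_mulVec_apply {t : ℕ} (u : Fin (t + 1) × Fin a → ℂ) (j : Fin t)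
    (d : Fin b) :
    ((blockM t P Q)ᵀ *ᵥ u) (j, d)
      = (extv u (j : ℕ) ᵥ* P) d + (extv u ((j : ℕ) + 1) ᵥ* Q) d := by
  have hsum : ((blockM t P Q)ᵀ *ᵥ u) (j, d)
      = ∑ i : Fin (t+1), ∑ c : Fin a,
          (if (i : ℕ) = (j : ℕ) then P c d * u (i, c) else 0)
          + ∑ i : Fin (t+1), ∑ c : Fin a,
          (if (i : ℕ) = (j : ℕ) + 1 then Q c d * u (i, c) else 0) := by
    rw [Matrix.mulVec, dotProduct, Fintype.sum_prod_type, ← Finset.sum_add_distrib]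
    refine Finset.sum_congr rfl fun i _ => ?_
    rw [← Finset.sum_add_distrib]
    refine Finset.sum_congr rfl fun c _ => ?_
    by_cases h1 : (i : ℕ) = (j : ℕ)
    · have h2 : ¬ ((i : ℕ) = (j : ℕ) + 1) := by omega
      simp [blockM, transpose_apply, h1, h2]
    · by_cases h2 : (i : ℕ) = (j : ℕ) + 1 <;> simp [blockM, transpose_apply, h1, h2]
  rw [hsum]
  have hj1 : (j : ℕ) < t + 1 := by omega
  have hj2 : (j : ℕ) + 1 < t + 1 := by omega
  congr 1
  · rw [Finset.sum_eq_single (⟨(j : ℕ), hj1⟩ : Fin (t+1))]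
    · simp only [Matrix.vecMul, dotProduct]
      refine Finset.sum_congr rfl fun c _ => ?_
      rw [extv_of_lt u hj1 c]; simp only [if_true]; exact mul_comm _ _
    · intro i _ hi
      have : ¬ ((i : ℕ) = (j : ℕ)) := fun hc => hi (by ext; simpa using hc)
      simp [this]
    · intro h'; exact absurd (Finset.mem_univ _) h'
  · rw [Finset.sum_eq_single (⟨(j : ℕ) + 1, hj2⟩ : Fin (t+1))]
    · simp only [Matrix.vecMul, dotProduct]
      refine Finset.sum_congr rfl fun c _ => ?_
      rw [extv_of_lt u hj2 c]; simp only [if_true]; exact mul_comm _ _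
    · intro i _ hi
      have : ¬ ((i : ℕ) = (j : ℕ) + 1) := fun hc => hi (by ext; simpa using hc)
      simp [this]
    · intro h'; exact absurd (Finset.mem_univ _) h'


-- PART 2 starts here
lemma mem_ker_iff_sol {t : ℕ} (x : Fin t × Fin b → ℂ) :
    x ∈ LinearMap.ker (blockM t P Q).mulVecLin ↔ SolPred P Q t (extv x) := by
  rw [LinearMap.mem_ker, Matrix.mulVecLin_apply]
  constructor
  · intro h
    refine ⟨fun k hk => extv_of_ge x hk, ?_, ?_⟩
    · funext c
      have h0 := congrFun h ((0 : Fin (t+1)), c)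
      rw [blockM_mulVec_apply] at h0
      simpa [shf] using h0
    · intro k
      by_cases hk : k < t
      · funext c
        have hk1 : k + 1 < t + 1 := by omega
        have h0 := congrFun h ((⟨k+1, hk1⟩ : Fin (t+1)), c)
        rw [blockM_mulVec_apply] at h0
        simpa [shf] using h0
      · rw [extv_of_ge x (by omega), extv_of_ge x (by omega)]
        simp
  · rintro ⟨hsup, h0, hrec⟩
    funext ⟨i, c⟩
    rw [blockM_mulVec_apply]
    match hi : (i : ℕ) with
    | 0 => simp [shf, congrFun h0 c]
    | k + 1 =>
      have := congrFun (hrec k) c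
      simpa [shf] using this
lemma mem_ker_transpose_iff_chain {t : ℕ} (u : Fin (t + 1) × Fin a → ℂ) :
    u ∈ LinearMap.ker ((blockM t P Q)ᵀ).mulVecLin ↔ ChainPred P Q (t + 1) (extv u) := by
  rw [LinearMap.mem_ker, Matrix.mulVecLin_apply]
  constructor
  · intro h
    refine ⟨fun k hk => extv_of_ge u hk, ?_⟩
    intro k hk
    have hkt : k < t := by omega
    funext d
    have h0 := congrFun h ((⟨k, hkt⟩ : Fin t), d)
    rw [blockM_transpose_mulVec_apply] at h0
    simpa using h0
  · rintro ⟨hsup, hrec⟩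
    funext ⟨j, d⟩
    rw [blockM_transpose_mulVec_apply]
    have := congrFun (hrec (j : ℕ) (by omega)) d
    simpa using this

lemma sol_unique_zero_iff {t : ℕ} :
    (∀ x, SolPred P Q t x → x = 0) →
      Module.finrank ℂ (LinearMap.ker (blockM t P Q).mulVecLin) = 0 := by
  intro h
  have hker : LinearMap.ker (blockM t P Q).mulVecLin = ⊥ := by
    rw [eq_bot_iff]
    intro v hv
    have := h _ ((mem_ker_iff_sol P Q v).mp hv)
    rw [extv_eq_zero_iff] at this
    simp [this]
  rw [hker]; exact finrank_bot ℂ _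
lemma chain_unique_zero_iff {t : ℕ} :
    (∀ u, ChainPred P Q (t + 1) u → u = 0) →
      Module.finrank ℂ (LinearMap.ker ((blockM t P Q)ᵀ).mulVecLin) = 0 := by
  intro h
  have hker : LinearMap.ker ((blockM t P Q)ᵀ).mulVecLin = ⊥ := by
    rw [eq_bot_iff]
    intro v hv
    have := h _ ((mem_ker_transpose_iff_chain P Q v).mp hv)
    rw [extv_eq_zero_iff] at this
    simp [this]
  rw [hker]; exact finrank_bot ℂ _

/-- The key counting identity, from rank-nullity and `rank Mᵀ = rank M`. -/
lemma key_identity (t : ℕ) :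
    Module.finrank ℂ (LinearMap.ker ((blockM t P Q)ᵀ).mulVecLin) + t * b
      = Module.finrank ℂ (LinearMap.ker (blockM t P Q).mulVecLin) + (t + 1) * a := by
  have h1 := LinearMap.finrank_range_add_finrank_ker (blockM t P Q).mulVecLin
  have h2 := LinearMap.finrank_range_add_finrank_ker ((blockM t P Q)ᵀ).mulVecLin
  have hd1 : Module.finrank ℂ (Fin t × Fin b → ℂ) = t * b := by
    simp [Module.finrank_pi]
  have hd2 : Module.finrank ℂ (Fin (t+1) × Fin a → ℂ) = (t + 1) * a := by
    simp [Module.finrank_pi]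
  rw [hd1] at h1; rw [hd2] at h2
  have hr : Module.finrank ℂ (LinearMap.range ((blockM t P Q)ᵀ).mulVecLin)
      = Module.finrank ℂ (LinearMap.range (blockM t P Q).mulVecLin) :=
    Matrix.rank_transpose (blockM t P Q)
  omega

/-- existence of a nonzero polynomial solution when the pencil is wide -/
lemma exists_sol (hab : a < b) :
    ∃ x, x ≠ 0 ∧ SolPred P Q (a + 1) x := by
  have hkey := key_identity P Q (a + 1)
  have hne : LinearMap.ker (blockM (a+1) P Q).mulVecLin ≠ ⊥ := by
    intro hbot
    rw [hbot, finrank_bot] at hkey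
    have hb : a + 1 ≤ b := hab
    nlinarith [hkey, Nat.mul_le_mul_left (a+1) hb]
  obtain ⟨v, hv, hv0⟩ := (Submodule.ne_bot_iff _).mp hne
  refine ⟨extv v, ?_, (mem_ker_iff_sol P Q v).mp hv⟩
  intro h; exact hv0 ((extv_eq_zero_iff v).mp h)

/-- a minimal-degree nonzero polynomial solution -/
lemma exists_minimal (hab : a < b) :
    ∃ ε, (∃ x, x ≠ 0 ∧ SolPred P Q (ε + 1) x) ∧ (∀ y, SolPred P Q ε y → y = 0) := by
  classical
  have hex : ∃ t, ∃ x, x ≠ 0 ∧ SolPred P Q t x := ⟨a + 1, exists_sol P Q hab⟩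
  have hτ0 : Nat.find hex ≠ 0 := by
    intro h0
    obtain ⟨x, hx0, hsup, -⟩ := Nat.find_spec hex
    rw [h0] at hsup
    exact hx0 (funext fun k => hsup k (Nat.zero_le k))
  obtain ⟨ε, hε⟩ := Nat.exists_eq_succ_of_ne_zero hτ0
  have hspec := Nat.find_spec hex
  rw [hε] at hspec
  refine ⟨ε, hspec, ?_⟩
  intro y hy
  by_contra hy0
  exact Nat.find_min hex (by omega) ⟨y, hy0, hy⟩


lemma mulVec_sum {ι : Type*} (M : Matrix (Fin a) (Fin b) ℂ) (s : Finset ι)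
    (f : ι → Fin b → ℂ) : M *ᵥ (∑ i ∈ s, f i) = ∑ i ∈ s, M *ᵥ f i := by
  rw [← Matrix.mulVecLin_apply, map_sum]; simp [Matrix.mulVecLin_apply]

/-- The coefficients of a minimal-degree polynomial solution are linearly independent. -/
lemma indep {ε : ℕ} {x : ℕ → Fin b → ℂ}
    (hx : SolPred P Q (ε + 1) x) (hx0 : x ≠ 0)
    (hmin : ∀ y, SolPred P Q ε y → y = 0)
    (c : ℕ → ℂ) (hc : ∑ i ∈ Finset.range (ε + 1), c i • x i = 0) :
    ∀ i, i < ε + 1 → c i = 0 := by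
  classical
  by_contra hcon
  push_neg at hcon
  obtain ⟨i₀, hi₀l, hi₀⟩ := hcon
  obtain ⟨hxs, hxP0, hxrec⟩ := hx
  have hxr : ∀ k, P *ᵥ x (k + 1) = -(Q *ᵥ x k) := fun k =>
    eq_neg_of_add_eq_zero_left (hxrec k)
  set r := Nat.findGreatest (fun i => c i ≠ 0) ε with hrdef
  have hr : c r ≠ 0 := Nat.findGreatest_spec (P := fun i => c i ≠ 0) (n := ε) (m := i₀) (by omega) hi₀
  have hrε : r ≤ ε := Nat.findGreatest_le ε
  have hgt : ∀ i, r < i → i ≤ ε → c i = 0 := by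
    intro i h1 h2
    by_contra hne
    exact Nat.findGreatest_is_greatest h1 h2 hne
  -- the contracted solution y
  set y : ℕ → Fin b → ℂ := fun j => ∑ i ∈ Finset.range (ε + 1), c i • x (i + j + 1)
    with hydef
  have hy : SolPred P Q ε y := by
    refine ⟨?_, ?_, ?_⟩
    · intro k hk
      refine Finset.sum_eq_zero fun i _ => ?_
      rw [hxs (i + k + 1) (by omega), smul_zero]
    · rw [hydef]
      simp only []
      rw [mulVec_sum]
      have : ∀ i ∈ Finset.range (ε + 1),
          P *ᵥ c i • x (i + 0 + 1) = c i • -(Q *ᵥ x i) := by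
        intro i _
        rw [Matrix.mulVec_smul]
        congr 1
        rw [show i + 0 + 1 = i + 1 by omega]
        exact hxr i
      rw [Finset.sum_congr rfl this]
      have : ∑ i ∈ Finset.range (ε + 1), c i • -(Q *ᵥ x i)
          = -(Q *ᵥ ∑ i ∈ Finset.range (ε + 1), c i • x i) := by
        rw [mulVec_sum, ← Finset.sum_neg_distrib]
        refine Finset.sum_congr rfl fun i _ => ?_
        rw [Matrix.mulVec_smul, smul_neg]
      rw [this, hc]
      simp
    · intro k
      rw [hydef]
      simp only []
      rw [mulVec_sum, mulVec_sum, ← Finset.sum_add_distrib]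
      refine Finset.sum_eq_zero fun i _ => ?_
      rw [Matrix.mulVec_smul, Matrix.mulVec_smul, ← smul_add]
      rw [show i + (k + 1) + 1 = (i + k + 1) + 1 by omega]
      rw [hxrec (i + k + 1), smul_zero]
  have hy0 : y = 0 := hmin y hy
  have hyk : ∀ j, ∑ i ∈ Finset.range (ε + 1), c i • x (i + j + 1) = (0 : Fin b → ℂ) :=
    fun j => congrFun hy0 j
  -- the product solution xt (coefficients of c*(λ)·x(λ))
  set xt : ℕ → Fin b → ℂ :=
    fun k => ∑ i ∈ Finset.range (ε + 1), if r ≤ k + i then c i • x (k + i - r) else 0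
    with hxtdef
  have hxt_ge : ∀ k, ε ≤ k → xt k = 0 := by
    intro k hk
    have hrk : r ≤ k := le_trans hrε hk
    rcases eq_or_lt_of_le hrk with hkr | hkr
    · -- k = r
      have : xt k = ∑ i ∈ Finset.range (ε + 1), c i • x i := by
        refine Finset.sum_congr rfl fun i _ => ?_
        rw [if_pos (by omega), show k + i - r = i by omega]
      rw [this, hc]
    · -- r < k
      have : xt k = ∑ i ∈ Finset.range (ε + 1), c i • x (i + (k - r - 1) + 1) := by
        refine Finset.sum_congr rfl fun i _ => ?_
        rw [if_pos (by omega), show k + i - r = i + (k - r - 1) + 1 by omega]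
      rw [this, hyk]
  have hxtP0 : P *ᵥ xt 0 = 0 := by
    rw [hxtdef]
    simp only []
    rw [mulVec_sum]
    refine Finset.sum_eq_zero fun i hi => ?_
    rcases lt_trichotomy i r with h1 | h1 | h1
    · rw [if_neg (by omega), Matrix.mulVec_zero]
    · rw [if_pos (by omega), show 0 + i - r = 0 by omega, Matrix.mulVec_smul, hxP0,
        smul_zero]
    · rw [hgt i h1 (by simp at hi; omega)]
      simp
  have hxtrec : ∀ k, P *ᵥ xt (k + 1) + Q *ᵥ xt k = 0 := by
    intro k
    rw [hxtdef]
    simp only []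
    rw [mulVec_sum, mulVec_sum, ← Finset.sum_add_distrib]
    refine Finset.sum_eq_zero fun i _ => ?_
    by_cases h1 : r ≤ k + i
    · rw [if_pos (by omega : r ≤ k + 1 + i), if_pos h1, Matrix.mulVec_smul,
        Matrix.mulVec_smul, ← smul_add, show k + 1 + i - r = (k + i - r) + 1 by omega,
        hxrec (k + i - r), smul_zero]
    · by_cases h2 : r ≤ k + 1 + i
      · rw [if_pos h2, if_neg h1, Matrix.mulVec_zero, add_zero, Matrix.mulVec_smul,
          show k + 1 + i - r = 0 by omega, hxP0, smul_zero]
      · rw [if_neg h1, if_neg h2, Matrix.mulVec_zero, Matrix.mulVec_zero, add_zero]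
  have hxt0 : xt = 0 := hmin xt ⟨hxt_ge, hxtP0, hxtrec⟩
  -- lowest nonzero coefficient of x
  have hxex : ∃ k, x k ≠ 0 := by
    by_contra h
    push_neg at h
    exact hx0 (funext h)
  set j0 := Nat.find hxex with hj0def
  have hj0 : x j0 ≠ 0 := Nat.find_spec hxex
  have hj0min : ∀ k, k < j0 → x k = 0 := by
    intro k hk
    by_contra h
    exact Nat.find_min hxex hk h
  have hfin : xt j0 = c r • x j0 := by
    rw [hxtdef]
    simp only []
    rw [Finset.sum_eq_single_of_mem r (by simp; omega)]
    · rw [if_pos (by omega), show j0 + r - r = j0 by omega]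
    · intro i hi hir
      rcases lt_or_gt_of_ne hir with h1 | h1
      · -- i < r
        by_cases h2 : r ≤ j0 + i
        · rw [if_pos h2, hj0min (j0 + i - r) (by omega), smul_zero]
        · rw [if_neg h2]
      · rw [hgt i h1 (by simp at hi; omega)]
        simp
  rw [congrFun hxt0 j0] at hfin
  exact smul_ne_zero hr hj0 hfin.symm


-- PART 4
section helpers
variable {a' b' c' : ℕ}
lemma mul_vecMulVec (M : Matrix (Fin a') (Fin b') ℂ) (u : Fin b' → ℂ) (v : Fin c' → ℂ) :
    M * vecMulVec u v = vecMulVec (M *ᵥ u) v := by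
  ext i j
  simp [Matrix.mul_apply, Matrix.vecMulVec_apply, Matrix.mulVec, dotProduct,
    Finset.sum_mul, mul_assoc]
lemma vecMulVec_mulM (u : Fin a' → ℂ) (v : Fin b' → ℂ) (N : Matrix (Fin b') (Fin c') ℂ) :
    vecMulVec u v * N = vecMulVec u (v ᵥ* N) := by
  ext i j
  simp [Matrix.mul_apply, Matrix.vecMulVec_apply, Matrix.vecMul, dotProduct,
    Finset.mul_sum, mul_assoc]
lemma zero_vecMulVec (v : Fin c' → ℂ) : vecMulVec (0 : Fin a' → ℂ) v = 0 := by
  ext i j; simp [Matrix.vecMulVec_apply]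
lemma neg_vecMulVec (u : Fin a' → ℂ) (v : Fin c' → ℂ) :
    vecMulVec (-u) v = -vecMulVec u v := by
  ext i j; simp [Matrix.vecMulVec_apply]
lemma vecMulVec_negr (u : Fin a' → ℂ) (v : Fin c' → ℂ) :
    vecMulVec u (-v) = -vecMulVec u v := by
  ext i j; simp [Matrix.vecMulVec_apply]
lemma vecMulVec_add (u : Fin a' → ℂ) (v w : Fin c' → ℂ) :
    vecMulVec u (v + w) = vecMulVec u v + vecMulVec u w := by
  ext i j; simp [Matrix.vecMulVec_apply, mul_add]
end helpers

variable {p m n q : ℕ}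

/-- K1: injectivity kills left chains of the second pencil of length `ε+1`. -/
lemma K1 {A C : Matrix (Fin p) (Fin m) ℂ} {B D : Matrix (Fin n) (Fin q) ℂ}
    (hinj : ∀ X : Matrix (Fin m) (Fin n) ℂ, A * X * B - C * X * D = 0 → X = 0)
    {ε : ℕ} {x : ℕ → Fin m → ℂ} (hx : SolPred A C (ε + 1) x) (hx0 : x ≠ 0)
    (hmin : ∀ y, SolPred A C ε y → y = 0)
    {z : ℕ → Fin n → ℂ} (hz : ChainPred B D (ε + 1) z) : z = 0 := by
  obtain ⟨hxs, hxP0, hxrec⟩ := hx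
  have hCxε : C *ᵥ x ε = 0 := by
    have := hxrec ε
    rw [hxs (ε + 1) (by omega), Matrix.mulVec_zero, zero_add] at this
    exact this
  have hxr : ∀ k, A *ᵥ x (k + 1) = -(C *ᵥ x k) := fun k =>
    eq_neg_of_add_eq_zero_left (hxrec k)
  set X : Matrix (Fin m) (Fin n) ℂ :=
    ∑ k ∈ Finset.range (ε + 1), vecMulVec (x k) (z (ε - k)) with hXdef
  have hX0 : X = 0 := by
    apply hinj
    have hAXB : A * X * B = ∑ k ∈ Finset.range (ε + 1),
        vecMulVec (A *ᵥ x k) (z (ε - k) ᵥ* B) := by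
      rw [hXdef, Matrix.mul_sum, Matrix.sum_mul]
      exact Finset.sum_congr rfl fun k _ => by rw [mul_vecMulVec, vecMulVec_mulM]
    have hCXD : C * X * D = ∑ k ∈ Finset.range (ε + 1),
        vecMulVec (C *ᵥ x k) (z (ε - k) ᵥ* D) := by
      rw [hXdef, Matrix.mul_sum, Matrix.sum_mul]
      exact Finset.sum_congr rfl fun k _ => by rw [mul_vecMulVec, vecMulVec_mulM]
    rw [hAXB, hCXD, Finset.sum_range_succ' _ ε, Finset.sum_range_succ _ ε]
    rw [hxP0, zero_vecMulVec, add_zero, hCxε, zero_vecMulVec, add_zero]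
    have : ∀ k ∈ Finset.range ε,
        vecMulVec (A *ᵥ x (k + 1)) (z (ε - (k + 1)) ᵥ* B)
          = -vecMulVec (C *ᵥ x k) (z (ε - k - 1) ᵥ* B) := by
      intro k hk
      rw [hxr k, neg_vecMulVec, show ε - (k + 1) = ε - k - 1 by omega]
    rw [Finset.sum_congr rfl this, ← Finset.sum_sub_distrib]
    refine Finset.sum_eq_zero fun k hk => ?_
    simp only [Finset.mem_range] at hk
    have hrel := hz.2 (ε - k - 1) (by omega)
    rw [show ε - k - 1 + 1 = ε - k by omega] at hrel
    have hzz : z (ε - k - 1) ᵥ* B = -(z (ε - k) ᵥ* D) := eq_neg_of_add_eq_zero_left hrel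
    rw [hzz, vecMulVec_negr, neg_neg, sub_self]
  -- conclude z = 0
  funext j f
  by_cases hj : j ≤ ε
  · have hcol : ∑ i ∈ Finset.range (ε + 1), z (ε - i) f • x i = 0 := by
      funext e
      have hXe := congrFun (congrFun hX0 e) f
      rw [hXdef] at hXe
      have h1 : (∑ k ∈ Finset.range (ε + 1), vecMulVec (x k) (z (ε - k))) e f
          = ∑ k ∈ Finset.range (ε + 1), x k e * z (ε - k) f := by
        rw [Matrix.sum_apply]
        exact Finset.sum_congr rfl fun k _ => rfl
      have h2 : ∑ k ∈ Finset.range (ε + 1), x k e * z (ε - k) f = 0 := by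
        rw [← h1]; simpa using hXe
      show (∑ i ∈ Finset.range (ε + 1), z (ε - i) f • x i) e = 0
      rw [Finset.sum_apply]
      calc ∑ i ∈ Finset.range (ε + 1), (z (ε - i) f • x i) e
          = ∑ i ∈ Finset.range (ε + 1), x i e * z (ε - i) f :=
            Finset.sum_congr rfl fun i _ => mul_comm _ _
        _ = 0 := h2
    have hind := indep A C ⟨hxs, hxP0, hxrec⟩ hx0 hmin (fun i => z (ε - i) f) hcol
    have h2 : z (ε - (ε - j)) f = 0 := hind (ε - j) (by omega)
    rw [show ε - (ε - j) = j by omega] at h2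
    simpa using h2
  · have := congrFun (hz.1 j (by omega)) f
    simpa using this

/-- K2: surjectivity kills left chains of the first pencil of length `μ+1`. -/
lemma K2 {A C : Matrix (Fin p) (Fin m) ℂ} {B D : Matrix (Fin n) (Fin q) ℂ}
    (hsurj : ∀ E : Matrix (Fin p) (Fin q) ℂ, ∃ X : Matrix (Fin m) (Fin n) ℂ, A * X * B - C * X * D = E)
    {μ : ℕ} {w : ℕ → Fin q → ℂ} (hw : SolPred B D (μ + 1) w) (hw0 : w ≠ 0)
    (hminw : ∀ y, SolPred B D μ y → y = 0)
    {u : ℕ → Fin p → ℂ} (hu : ChainPred A C (μ + 1) u) : u = 0 := by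
  obtain ⟨hws, hwB0, hwrec⟩ := hw
  have hDwμ : D *ᵥ w μ = 0 := by
    have := hwrec μ
    rw [hws (μ + 1) (by omega), Matrix.mulVec_zero, zero_add] at this
    exact this
  have hwr : ∀ k, B *ᵥ w (k + 1) = -(D *ᵥ w k) := fun k =>
    eq_neg_of_add_eq_zero_left (hwrec k)
  have hphi : ∀ X : Matrix (Fin m) (Fin n) ℂ,
      ∑ k ∈ Finset.range (μ + 1), u (μ - k) ⬝ᵥ ((A * X * B - C * X * D) *ᵥ w k) = 0 := by
    intro X
    have hterm : ∀ k, (A * X * B - C * X * D) *ᵥ w k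
        = A *ᵥ (X *ᵥ (B *ᵥ w k)) - C *ᵥ (X *ᵥ (D *ᵥ w k)) := by
      intro k
      rw [Matrix.sub_mulVec, ← Matrix.mulVec_mulVec, ← Matrix.mulVec_mulVec,
        ← Matrix.mulVec_mulVec, ← Matrix.mulVec_mulVec]
    have hsplit : ∀ k, u (μ - k) ⬝ᵥ ((A * X * B - C * X * D) *ᵥ w k)
        = (u (μ - k) ᵥ* A) ⬝ᵥ (X *ᵥ (B *ᵥ w k))
          - (u (μ - k) ᵥ* C) ⬝ᵥ (X *ᵥ (D *ᵥ w k)) := by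
      intro k
      rw [hterm k, dotProduct_sub,
        Matrix.dotProduct_mulVec (u (μ - k)) A (X *ᵥ (B *ᵥ w k)),
        Matrix.dotProduct_mulVec (u (μ - k)) C (X *ᵥ (D *ᵥ w k))]
    rw [Finset.sum_congr rfl fun k _ => hsplit k, Finset.sum_sub_distrib]
    rw [Finset.sum_range_succ' _ μ, Finset.sum_range_succ _ μ]
    rw [hwB0, Matrix.mulVec_zero, dotProduct_zero, add_zero]
    rw [hDwμ, Matrix.mulVec_zero, dotProduct_zero, add_zero]
    have : ∀ k ∈ Finset.range μ,
        (u (μ - (k + 1)) ᵥ* A) ⬝ᵥ (X *ᵥ (B *ᵥ w (k + 1)))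
          = -((u (μ - k - 1) ᵥ* A) ⬝ᵥ (X *ᵥ (D *ᵥ w k))) := by
      intro k hk
      rw [hwr k, show μ - (k + 1) = μ - k - 1 by omega, Matrix.mulVec_neg,
        dotProduct_neg]
    rw [Finset.sum_congr rfl this, ← Finset.sum_sub_distrib]
    refine Finset.sum_eq_zero fun k hk => ?_
    simp only [Finset.mem_range] at hk
    have hrel := hu.2 (μ - k - 1) (by omega)
    rw [show μ - k - 1 + 1 = μ - k by omega] at hrel
    have huu : u (μ - k - 1) ᵥ* A = -(u (μ - k) ᵥ* C) := eq_neg_of_add_eq_zero_left hrel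
    rw [huu, neg_dotProduct, neg_neg, sub_self]
  -- specialize to elementary matrices
  have hcomp : ∀ (i0 : Fin p) (j0 : Fin q),
      ∑ k ∈ Finset.range (μ + 1), u (μ - k) i0 * w k j0 = 0 := by
    intro i0 j0
    obtain ⟨X, hX⟩ := hsurj (Matrix.of fun i j => if i = i0 ∧ j = j0 then (1 : ℂ) else 0)
    have := hphi X
    rw [hX] at this
    have hEval : ∀ k, u (μ - k) ⬝ᵥ
        ((Matrix.of fun i j => if i = i0 ∧ j = j0 then (1 : ℂ) else 0) *ᵥ w k)
          = u (μ - k) i0 * w k j0 := by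
      intro k
      have hv : (Matrix.of fun i j => if i = i0 ∧ j = j0 then (1 : ℂ) else 0) *ᵥ w k
          = fun i => if i = i0 then w k j0 else 0 := by
        funext i
        by_cases hi : i = i0 <;>
          simp [Matrix.mulVec, dotProduct, hi, Finset.sum_ite_eq' Finset.univ j0]
      rw [hv]
      simp [dotProduct, Finset.sum_ite_eq' Finset.univ i0, mul_comm]
    rwa [Finset.sum_congr rfl fun k _ => hEval k] at this
  funext j f
  by_cases hj : j ≤ μ
  · have hc : ∑ k ∈ Finset.range (μ + 1), (u (μ - k) f) • w k = 0 := by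
      funext j0
      rw [Finset.sum_apply]
      simpa using hcomp f j0
    have hind := indep B D ⟨hws, hwB0, hwrec⟩ hw0 hminw (fun k => u (μ - k) f) hc
    have h2 : u (μ - (μ - j)) f = 0 := hind (μ - j) (by omega)
    rw [show μ - (μ - j) = j by omega] at h2
    simpa using h2
  · have := congrFun (hu.1 j (by omega)) f
    simpa using this


-- PART 5
/-- The core dimension lemma. -/
lemma core (hp : 0 < p) (hn : 0 < n) (hpm : p < m) (hnq : n < q)
    (A C : Matrix (Fin p) (Fin m) ℂ) (B D : Matrix (Fin n) (Fin q) ℂ)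
    (hinj : ∀ X : Matrix (Fin m) (Fin n) ℂ, A * X * B - C * X * D = 0 → X = 0)
    (hsurj : ∀ E : Matrix (Fin p) (Fin q) ℂ, ∃ X : Matrix (Fin m) (Fin n) ℂ, A * X * B - C * X * D = E) :
    ∃ s : ℕ, 0 < s ∧ m * s = p * (s + 1) ∧ q * s = n * (s + 1) := by
  obtain ⟨ε, ⟨x, hx0, hx⟩, hminx⟩ := exists_minimal A C hpm
  obtain ⟨μ, ⟨w, hw0, hw⟩, hminw⟩ := exists_minimal B D hnq
  have hU2 : Module.finrank ℂ (LinearMap.ker ((blockM ε B D)ᵀ).mulVecLin) = 0 :=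
    chain_unique_zero_iff B D (fun z hz => K1 hinj hx hx0 hminx hz)
  have hU1 : Module.finrank ℂ (LinearMap.ker ((blockM μ A C)ᵀ).mulVecLin) = 0 :=
    chain_unique_zero_iff A C (fun u hu => K2 hsurj hw hw0 hminw hu)
  have hS1 : Module.finrank ℂ (LinearMap.ker (blockM ε A C).mulVecLin) = 0 :=
    sol_unique_zero_iff A C hminx
  have hS2 : Module.finrank ℂ (LinearMap.ker (blockM μ B D).mulVecLin) = 0 :=
    sol_unique_zero_iff B D hminw
  have I1ε := key_identity A C ε
  have I1μ := key_identity A C μ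
  have I2ε := key_identity B D ε
  have I2μ := key_identity B D μ
  rw [hS1, Nat.zero_add] at I1ε
  rw [hU1, Nat.zero_add] at I1μ
  rw [hU2, Nat.zero_add] at I2ε
  rw [hS2, Nat.zero_add] at I2μ
  -- the four inequalities
  have e1 : ε * m ≤ (ε + 1) * p := by
    calc ε * m ≤ Module.finrank ℂ (LinearMap.ker ((blockM ε A C)ᵀ).mulVecLin) + ε * m :=
          Nat.le_add_left _ _
      _ = (ε + 1) * p := I1ε
  have e2 : (μ + 1) * p ≤ μ * m := by
    calc (μ + 1) * p ≤ Module.finrank ℂ (LinearMap.ker (blockM μ A C).mulVecLin)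
          + (μ + 1) * p := Nat.le_add_left _ _
      _ = μ * m := I1μ.symm
  have e3 : μ * q ≤ (μ + 1) * n := by
    calc μ * q ≤ Module.finrank ℂ (LinearMap.ker ((blockM μ B D)ᵀ).mulVecLin) + μ * q :=
          Nat.le_add_left _ _
      _ = (μ + 1) * n := I2μ
  have e4 : (ε + 1) * n ≤ ε * q := by
    calc (ε + 1) * n ≤ Module.finrank ℂ (LinearMap.ker (blockM ε B D).mulVecLin)
          + (ε + 1) * n := Nat.le_add_left _ _
      _ = ε * q := I2ε.symm
  -- arithmetic
  obtain ⟨g, hg⟩ : ∃ g, m = p + g := ⟨m - p, by omega⟩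
  obtain ⟨h, hh⟩ : ∃ h, q = n + h := ⟨q - n, by omega⟩
  have hg0 : 0 < g := by omega
  have hh0 : 0 < h := by omega
  have f1 : ε * g ≤ p := by
    have := e1
    rw [hg, Nat.mul_add, Nat.add_mul, Nat.one_mul] at this
    exact Nat.le_of_add_le_add_left this
  have f2 : p ≤ μ * g := by
    have := e2
    rw [hg, Nat.mul_add, Nat.add_mul, Nat.one_mul] at this
    exact Nat.le_of_add_le_add_left this
  have f3 : μ * h ≤ n := by
    have := e3
    rw [hh, Nat.mul_add, Nat.add_mul, Nat.one_mul] at this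
    exact Nat.le_of_add_le_add_left this
  have f4 : n ≤ ε * h := by
    have := e4
    rw [hh, Nat.mul_add, Nat.add_mul, Nat.one_mul] at this
    exact Nat.le_of_add_le_add_left this
  have hεμ : ε ≤ μ := Nat.le_of_mul_le_mul_right (le_trans f1 f2) hg0
  have hμε : μ ≤ ε := Nat.le_of_mul_le_mul_right (le_trans f3 f4) hh0
  have hεμeq : ε = μ := le_antisymm hεμ hμε
  subst hεμeq
  have hpg : ε * g = p := le_antisymm f1 f2
  have hnh : ε * h = n := le_antisymm f3 f4
  refine ⟨ε, ?_, ?_, ?_⟩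
  · rcases Nat.eq_zero_or_pos ε with h0 | h0
    · subst h0; simp at hnh; omega
    · exact h0
  · rw [hg]
    calc (p + g) * ε = p * ε + ε * g := by ring
      _ = p * ε + p := by rw [hpg]
      _ = p * (ε + 1) := by ring
  · rw [hh]
    calc (n + h) * ε = n * ε + ε * h := by ring
      _ = n * ε + n := by rw [hnh]
      _ = n * (ε + 1) := by ring

/-- From unique solvability: triviality of the kernel. -/
lemma op_inj {p m n q : ℕ} {A C : Matrix (Fin p) (Fin m) ℂ} {B D : Matrix (Fin n) (Fin q) ℂ}
    (hUR : ∀ E : Matrix (Fin p) (Fin q) ℂ, ∃! X : Matrix (Fin m) (Fin n) ℂ,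
        A * X * B - C * X * D = E) :
    ∀ X : Matrix (Fin m) (Fin n) ℂ, A * X * B - C * X * D = 0 → X = 0 := by
  intro X hX
  obtain ⟨X0, hX0, huniq⟩ := hUR 0
  have h1 := huniq X hX
  have h2 := huniq 0 (by simp)
  rw [h1, h2]


end Syl12

/-- If the generalized Sylvester equation `A X B - C X D = E` has a unique solution for
every right-hand side, then `p/m = n/q = d` with `d ∈ {1} ∪ {s/(s+1)} ∪ {(s+1)/s}`;
equivalently, either `p = m` and `n = q`, or there is a positive integer `s` with
`ms = p(s+1)` and `qs = n(s+1)`, or there is a positive integer `s` with `ps = m(s+1)`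
and `ns = q(s+1)`. -/
theorem stmt12 (p m n q : ℕ) (hp : 0 < p) (hm : 0 < m) (hn : 0 < n) (hq : 0 < q)
    (A C : Matrix (Fin p) (Fin m) ℂ) (B D : Matrix (Fin n) (Fin q) ℂ)
    (hUR : ∀ E : Matrix (Fin p) (Fin q) ℂ, ∃! X : Matrix (Fin m) (Fin n) ℂ,
        A * X * B - C * X * D = E) :
    (p = m ∧ n = q) ∨
      (∃ s : ℕ, 0 < s ∧ m * s = p * (s + 1) ∧ q * s = n * (s + 1)) ∨
      (∃ s : ℕ, 0 < s ∧ p * s = m * (s + 1) ∧ n * s = q * (s + 1)) := by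
  classical
  have hinj : ∀ X : Matrix (Fin m) (Fin n) ℂ, A * X * B - C * X * D = 0 → X = 0 :=
    Syl12.op_inj hUR
  have hsurj : ∀ E : Matrix (Fin p) (Fin q) ℂ, ∃ X : Matrix (Fin m) (Fin n) ℂ, A * X * B - C * X * D = E :=
    fun E => ⟨(hUR E).choose, (hUR E).choose_spec.1⟩
  -- the Sylvester operator as a linear map
  let L : Matrix (Fin m) (Fin n) ℂ →ₗ[ℂ] Matrix (Fin p) (Fin q) ℂ :=
    { toFun := fun X => A * X * B - C * X * D
      map_add' := by
        intro X Y
        simp only [Matrix.mul_add, Matrix.add_mul]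
        abel
      map_smul' := by
        intro c X
        simp only [Matrix.mul_smul, Matrix.smul_mul, RingHom.id_apply, smul_sub] }
  have hLbij : Function.Bijective L := by
    constructor
    · intro X Y hXY
      obtain ⟨Z, hZ, huniq⟩ := hUR (A * Y * B - C * Y * D)
      have h1 : X = Z := huniq X hXY
      have h2 : Y = Z := huniq Y rfl
      rw [h1, h2]
    · intro E
      obtain ⟨X, hX⟩ := hsurj E
      exact ⟨X, hX⟩
  have hdim : m * n = p * q := by
    have hfe := LinearEquiv.finrank_eq (LinearEquiv.ofBijective L hLbij)
    rw [Module.finrank_matrix, Module.finrank_matrix] at hfe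
    simpa using hfe
  rcases lt_trichotomy p m with hlt | heq | hgt
  · -- p < m : middle disjunct
    have hnq : n < q := by
      have h1 : p * n < m * n := Nat.mul_lt_mul_of_pos_right hlt hn
      rw [hdim] at h1
      exact Nat.lt_of_mul_lt_mul_left h1
    exact Or.inr (Or.inl (Syl12.core hp hn hlt hnq A C B D hinj hsurj))
  · -- p = m : first disjunct
    subst heq
    have : n = q := Nat.eq_of_mul_eq_mul_left hp hdim
    exact Or.inl ⟨rfl, this⟩
  · -- m < p : transposed system
    have hqn : q < n := by
      have h1 : m * q < p * q := Nat.mul_lt_mul_of_pos_right hgt hq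
      rw [← hdim] at h1
      exact Nat.lt_of_mul_lt_mul_left h1
    have hinj' : ∀ X' : Matrix (Fin n) (Fin m) ℂ,
        Bᵀ * X' * Aᵀ - Dᵀ * X' * Cᵀ = 0 → X' = 0 := by
      intro X' hX'
      have key : A * X'ᵀ * B - C * X'ᵀ * D = (Bᵀ * X' * Aᵀ - Dᵀ * X' * Cᵀ)ᵀ := by
        simp [Matrix.transpose_sub, Matrix.transpose_mul, Matrix.mul_assoc]
      rw [hX'] at key
      have h0 : A * X'ᵀ * B - C * X'ᵀ * D = 0 := by rw [key]; simp
      have := hinj X'ᵀ h0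
      have := congrArg Matrix.transpose this
      simpa using this
    have hsurj' : ∀ E' : Matrix (Fin q) (Fin p) ℂ,
        ∃ X' : Matrix (Fin n) (Fin m) ℂ, Bᵀ * X' * Aᵀ - Dᵀ * X' * Cᵀ = E' := by
      intro E'
      obtain ⟨X, hX⟩ := hsurj E'ᵀ
      refine ⟨Xᵀ, ?_⟩
      have key : Bᵀ * Xᵀ * Aᵀ - Dᵀ * Xᵀ * Cᵀ = (A * X * B - C * X * D)ᵀ := by
        simp [Matrix.transpose_sub, Matrix.transpose_mul, Matrix.mul_assoc]
      rw [key, hX, Matrix.transpose_transpose]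
    obtain ⟨s, hs0, hs1, hs2⟩ := Syl12.core hq hm hqn hgt Bᵀ Dᵀ Aᵀ Cᵀ hinj' hsurj'
    exact Or.inr (Or.inr ⟨s, hs0, hs2, hs1⟩)
end

section
/- Define A₁ = I₂ ∈ ℂ^{2×2}, B₁ = [0] ∈ ℂ^{1×1}, C₁ = [1; 0] ∈ ℂ^{2×1}, D₁ = [1; 0] ∈ ℂ^{2×1}, and A₂ = [[0,0],[0,1]] ∈ ℂ^{2×2}, B₂ = [1] ∈ ℂ^{1×1}, C₂ = [1; 0] ∈ ℂ^{2×1}, D₂ = [1; 0] ∈ ℂ^{2×1}, and let Q₁(λ) = [[λD₁ᵀ, B₁ᵀ],[A₁, λC₁]] and Q₂(λ) = [[λD₂ᵀ, B₂ᵀ],[A₂, λC₂]] be the associated 3×3 pencils. Then: (a) there exist 3×3 permutation matrices P and S such that Q₂(λ) = P·Q₁(λ)·S for all λ ∈ ℂ; (b) the homogeneous equation A₁XB₁ + C₁XᵀD₁ = 0 has a nonzero solution X ∈ ℂ^{2×1}; (c) the homogeneous equation A₂XB₂ + C₂XᵀD₂ = 0 has only the trivial solution X = 0 in ℂ^{2×1}.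 -/
open Matrix

/-- The coefficient matrices of the two counterexample equations. -/
noncomputable def exA₁ : Matrix (Fin 2) (Fin 2) ℂ := !![1, 0; 0, 1]
noncomputable def exB₁ : Matrix (Fin 1) (Fin 1) ℂ := !![0]
noncomputable def exC₁ : Matrix (Fin 2) (Fin 1) ℂ := !![1; 0]
noncomputable def exD₁ : Matrix (Fin 2) (Fin 1) ℂ := !![1; 0]
noncomputable def exA₂ : Matrix (Fin 2) (Fin 2) ℂ := !![0, 0; 0, 1]
noncomputable def exB₂ : Matrix (Fin 1) (Fin 1) ℂ := !![1]
noncomputable def exC₂ : Matrix (Fin 2) (Fin 1) ℂ := !![1; 0]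
noncomputable def exD₂ : Matrix (Fin 2) (Fin 1) ℂ := !![1; 0]

lemma sumIdx0 : (Fin.addCases Sum.inl Sum.inr (0 : Fin (1+2)) : Fin 1 ⊕ Fin 2) = Sum.inl 0 := by
  decide

lemma sumIdx1 : (Fin.addCases Sum.inl Sum.inr (1 : Fin (1+2)) : Fin 1 ⊕ Fin 2) = Sum.inr 0 := by
  decide

lemma sumIdx2 : (Fin.addCases Sum.inl Sum.inr (2 : Fin (1+2)) : Fin 1 ⊕ Fin 2) = Sum.inr 1 := by
  decide

lemma sumIdx0' : (Fin.addCases Sum.inl Sum.inr (0 : Fin (2+1)) : Fin 2 ⊕ Fin 1) = Sum.inl 0 := by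
  decide

lemma sumIdx1' : (Fin.addCases Sum.inl Sum.inr (1 : Fin (2+1)) : Fin 2 ⊕ Fin 1) = Sum.inl 1 := by
  decide

lemma sumIdx2' : (Fin.addCases Sum.inl Sum.inr (2 : Fin (2+1)) : Fin 2 ⊕ Fin 1) = Sum.inr 0 := by
  decide

/-- The two pencils `Q₁, Q₂` are obtained from one another by row and column
permutations, yet the first homogeneous equation has a nonzero solution while the second
has only the trivial one. -/
theorem stmt16 :
    (∃ (σ τ : Equiv.Perm (Fin 3)) (P S : Matrix (Fin 3) (Fin 3) ℂ),
      (∀ i j, P i j = if σ i = j then 1 else 0) ∧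
      (∀ i j, S i j = if τ i = j then 1 else 0) ∧
      Qt exA₂ exB₂ exC₂ exD₂ =
        P.map Polynomial.C * Qt exA₁ exB₁ exC₁ exD₁ * S.map Polynomial.C) ∧
    (∃ X : Matrix (Fin 2) (Fin 1) ℂ, X ≠ 0 ∧
      exA₁ * X * exB₁ + exC₁ * Xᵀ * exD₁ = 0) ∧
    (∀ X : Matrix (Fin 2) (Fin 1) ℂ,
      exA₂ * X * exB₂ + exC₂ * Xᵀ * exD₂ = 0 → X = 0) := by
  refine ⟨⟨Equiv.swap 0 1, Equiv.swap 0 2,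
      Matrix.of (fun i j => if Equiv.swap (0:Fin 3) 1 i = j then 1 else 0),
      Matrix.of (fun i j => if Equiv.swap (0:Fin 3) 2 i = j then 1 else 0),
      fun i j => rfl, fun i j => rfl, ?_⟩, ⟨!![0; 1], ?_, ?_⟩, ?_⟩
  · ext i j : 2
    fin_cases i <;> fin_cases j <;>
      simp [Qt, pencilMat, exA₁, exB₁, exC₁, exD₁, exA₂, exB₂, exC₂, exD₂,
        Matrix.mul_apply, Fin.sum_univ_three, Matrix.fromBlocks,
        Matrix.reindex_apply, Matrix.submatrix_apply,
        finSumFinEquiv, sumIdx0, sumIdx1, sumIdx2, sumIdx0', sumIdx1', sumIdx2',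
        Equiv.swap_apply_def]
  · intro h
    have := congrFun (congrFun h 1) 0
    simp at this
  · ext i j
    fin_cases i <;> fin_cases j <;>
      simp [exA₁, exB₁, exC₁, exD₁, Matrix.mul_apply, Fin.sum_univ_two,
        Fin.sum_univ_one, Matrix.transpose_apply, Matrix.vecHead, Matrix.vecTail, Matrix.vecMul, dotProduct]
  · intro X hX
    have h0 := congrFun (congrFun hX 0) 0
    have h1 := congrFun (congrFun hX 1) 0
    simp [exA₂, exB₂, exC₂, exD₂, Matrix.mul_apply, Fin.sum_univ_two,
      Fin.sum_univ_one, Matrix.vecMul, dotProduct,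
      Matrix.transpose_apply, Matrix.vecHead, Matrix.vecTail] at h0 h1
    ext i j
    fin_cases i <;> fin_cases j <;> simp [h0, h1]
end
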